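/- For every ν ≥ 0 and every x > 0, I_{ν−1}(x)/I_ν(x) > (ν + √(ν² + (ν/(ν+1))·x²))/x. -/

import Mathlib

/-- The modified Bessel function of the first kind,
`I_ν(x) = ∑_{k=0}^∞ (x/2)^{2k+ν} / (k! Γ(k+ν+1))`
(here `1/Γ` vanishes at nonpositive integer arguments, since `Real.Gamma` is `0` there). -/
noncomputable def besselI (ν x : ℝ) : ℝ :=
  ∑' k : ℕ, (x / 2) ^ (2 * (k : ℝ) + ν) / ((Nat.factorial k : ℝ) * Real.Gamma ((k : ℝ) + ν + 1))

namespace BesselAux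

open Real Finset Finset.Nat

/-- The `k`-th term of the series defining `besselI ν x`. -/
noncomputable def bT (ν x : ℝ) (k : ℕ) : ℝ :=
  (x / 2) ^ (2 * (k : ℝ) + ν) / ((Nat.factorial k : ℝ) * Real.Gamma ((k : ℝ) + ν + 1))

lemma besselI_eq (ν x : ℝ) : besselI ν x = ∑' k, bT ν x k := rfl

lemma one_div_Gamma_eq (t : ℝ) (ht : 0 ≤ t) :
    1 / Real.Gamma t = t / Real.Gamma (t + 1) := by
  rcases eq_or_lt_of_le ht with h | h
  · simp [← h, Real.Gamma_zero]
  · rw [Real.Gamma_add_one (ne_of_gt h)]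
    field_simp

lemma bT_nonneg {ν x : ℝ} (hν : -1 ≤ ν) (hx : 0 < x) (k : ℕ) : 0 ≤ bT ν x k := by
  apply div_nonneg (le_of_lt (Real.rpow_pos_of_pos (by linarith) _))
  exact mul_nonneg (Nat.cast_nonneg _)
    (Real.Gamma_nonneg_of_nonneg (by push_cast; linarith [Nat.cast_nonneg (α := ℝ) k]))

lemma bT_succ {ν x : ℝ} (hx : 0 < x) (k : ℕ) (hk : (k : ℝ) + ν + 1 ≠ 0) :
    bT ν x (k + 1) = bT ν x k * ((x / 2) ^ (2 : ℝ) / (((k : ℝ) + 1) * ((k : ℝ) + ν + 1))) := by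
  have hx2 : (0:ℝ) < x / 2 := by linarith
  have h1 : (x / 2) ^ (2 * ((k : ℝ) + 1) + ν) = (x / 2) ^ (2 * (k : ℝ) + ν) * (x / 2) ^ (2:ℝ) := by
    rw [← Real.rpow_add hx2]; ring_nf
  have h2 : Real.Gamma (((k : ℕ) + 1 : ℕ) + ν + 1) = ((k : ℝ) + ν + 1) * Real.Gamma ((k : ℝ) + ν + 1) := by
    push_cast
    rw [show (k : ℝ) + 1 + ν + 1 = ((k : ℝ) + ν + 1) + 1 by ring, Real.Gamma_add_one hk]
  simp only [bT, Nat.factorial_succ, h2]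
  push_cast [h1]
  field_simp

lemma bT_summable {ν x : ℝ} (hx : 0 < x) : Summable (bT ν x) := by
  apply summable_of_ratio_norm_eventually_le (show (1:ℝ)/2 < 1 by norm_num)
  have hx2 : (0:ℝ) < x / 2 := by linarith
  obtain ⟨N, hN⟩ := exists_nat_ge (max (|ν| + 1) ((x/2)^(2:ℝ) * 2))
  filter_upwards [Filter.eventually_ge_atTop N] with k hk
  have hkN : (N : ℝ) ≤ (k : ℝ) := by exact_mod_cast hk
  have h1 : |ν| + 1 ≤ (k : ℝ) := le_trans (le_max_left _ _) (hN.trans hkN)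
  have h2 : (x/2)^(2:ℝ) * 2 ≤ (k : ℝ) := le_trans (le_max_right _ _) (hN.trans hkN)
  have hkpos : (0:ℝ) < (k : ℝ) + ν + 1 := by
    have := abs_le.mp (le_refl |ν|) |>.1
    linarith
  rw [bT_succ hx k (ne_of_gt hkpos)]
  rw [norm_mul]
  have hterm : ‖(x / 2) ^ (2:ℝ) / (((k : ℝ) + 1) * ((k : ℝ) + ν + 1))‖ ≤ 1/2 := by
    rw [norm_div, norm_mul]
    have hp : (0:ℝ) < (x/2)^(2:ℝ) := Real.rpow_pos_of_pos hx2 _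
    rw [Real.norm_eq_abs, Real.norm_eq_abs, Real.norm_eq_abs,
      abs_of_pos hp, abs_of_pos (by positivity : (0:ℝ) < (k:ℝ)+1), abs_of_pos hkpos]
    rw [div_le_div_iff₀ (by positivity) (by norm_num)]
    have h3 : (1:ℝ) ≤ (k : ℝ) + ν + 1 := by
      have := abs_le.mp (le_refl |ν|) |>.1
      linarith
    nlinarith [hp.le]
  calc ‖bT ν x k‖ * ‖(x / 2) ^ (2:ℝ) / (((k : ℝ) + 1) * ((k : ℝ) + ν + 1))‖
      ≤ ‖bT ν x k‖ * (1/2) := by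
        exact mul_le_mul_of_nonneg_left hterm (norm_nonneg _)
    _ = 1/2 * ‖bT ν x k‖ := by ring

lemma besselI_pos {ν x : ℝ} (hν : -1 ≤ ν) (hx : 0 < x) : 0 < besselI ν x := by
  rw [besselI_eq]
  refine Summable.tsum_pos (bT_summable hx) (bT_nonneg hν hx) 1 ?_
  have hx2 : (0:ℝ) < x / 2 := by linarith
  apply div_pos (Real.rpow_pos_of_pos hx2 _)
  apply mul_pos (by norm_num [Nat.factorial])
  exact Real.Gamma_pos_of_pos (by push_cast; linarith)


lemma bT_pos {ν x : ℝ} (hν : -1 < ν) (hx : 0 < x) (k : ℕ) : 0 < bT ν x k := by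
  have hx2 : (0:ℝ) < x / 2 := by linarith
  apply div_pos (Real.rpow_pos_of_pos hx2 _)
  apply mul_pos (by exact_mod_cast Nat.factorial_pos k)
  exact Real.Gamma_pos_of_pos (by have : (0:ℝ) ≤ (k:ℝ) := Nat.cast_nonneg k; linarith)

lemma bT_left {ν x : ℝ} (hν : 0 ≤ ν) (hx : 0 < x) (j : ℕ) :
    bT (ν - 1) x j = bT ν x j * (((j:ℝ) + ν) / (x / 2)) := by
  have hx2 : (0:ℝ) < x / 2 := by linarith
  have hj : (0:ℝ) ≤ (j:ℝ) := Nat.cast_nonneg j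
  have hΓ : (0:ℝ) < Real.Gamma ((j:ℝ) + ν + 1) := Real.Gamma_pos_of_pos (by linarith)
  have hfac : (0:ℝ) < (Nat.factorial j : ℝ) := by exact_mod_cast Nat.factorial_pos j
  have hg : 1 / Real.Gamma ((j:ℝ) + ν) = ((j:ℝ) + ν) / Real.Gamma ((j:ℝ) + ν + 1) :=
    one_div_Gamma_eq _ (by linarith)
  have hp : (x/2) ^ (2*(j:ℝ) + ν) = (x/2) ^ (2*(j:ℝ) + (ν-1)) * (x/2) := by
    rw [show (2*(j:ℝ)+ν) = (2*(j:ℝ)+(ν-1)) + 1 by ring, Real.rpow_add hx2, Real.rpow_one]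
  have hcast : (j:ℝ) + (ν - 1) + 1 = (j:ℝ) + ν := by ring
  rw [bT, bT, hcast, hp, div_mul_eq_div_div, div_eq_mul_one_div
    ((x/2) ^ (2*(j:ℝ)+(ν-1)) / (Nat.factorial j : ℝ)), hg]
  field_simp

lemma bT_right {ν x : ℝ} (hν : 0 ≤ ν) (hx : 0 < x) (k : ℕ) :
    bT (ν + 1) x k = bT ν x k * ((x / 2) / ((k:ℝ) + ν + 1)) := by
  have hx2 : (0:ℝ) < x / 2 := by linarith
  have hk : (0:ℝ) ≤ (k:ℝ) := Nat.cast_nonneg k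
  have hpos : (0:ℝ) < (k:ℝ) + ν + 1 := by linarith
  have hΓ : (0:ℝ) < Real.Gamma ((k:ℝ) + ν + 1) := Real.Gamma_pos_of_pos (by linarith)
  have hfac : (0:ℝ) < (Nat.factorial k : ℝ) := by exact_mod_cast Nat.factorial_pos k
  have hG2 : Real.Gamma ((k:ℝ) + (ν + 1) + 1) = ((k:ℝ) + ν + 1) * Real.Gamma ((k:ℝ) + ν + 1) := by
    rw [show (k:ℝ) + (ν+1) + 1 = ((k:ℝ) + ν + 1) + 1 by ring, Real.Gamma_add_one (ne_of_gt hpos)]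
  have hp : (x/2) ^ (2*(k:ℝ) + (ν+1)) = (x/2) ^ (2*(k:ℝ) + ν) * (x/2) := by
    rw [show (2*(k:ℝ)+(ν+1)) = (2*(k:ℝ)+ν) + 1 by ring, Real.rpow_add hx2, Real.rpow_one]
  rw [bT, bT, hG2, hp]
  field_simp

lemma bT_mul {ν x : ℝ} (hν : 0 ≤ ν) (hx : 0 < x) (j k : ℕ) :
    bT (ν - 1) x j * bT (ν + 1) x k
      = (bT ν x j * bT ν x k) * (((j:ℝ) + ν) / ((k:ℝ) + ν + 1)) := by
  have hx2 : (0:ℝ) < x / 2 := by linarith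
  have hk : (0:ℝ) ≤ (k:ℝ) := Nat.cast_nonneg k
  have hpos : (0:ℝ) < (k:ℝ) + ν + 1 := by linarith
  rw [bT_left hν hx j, bT_right hν hx k]
  field_simp

lemma bT_shift {ν x : ℝ} (hν : 0 ≤ ν) (hx : 0 < x) (k : ℕ) :
    bT ν x (k + 1) = bT (ν + 1) x k * ((x / 2) / ((k:ℝ) + 1)) := by
  have hx2 : (0:ℝ) < x / 2 := by linarith
  have hk : (0:ℝ) ≤ (k:ℝ) := Nat.cast_nonneg k
  have hΓ : (0:ℝ) < Real.Gamma ((k:ℝ) + (ν + 1) + 1) := Real.Gamma_pos_of_pos (by linarith)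
  have hfac : (0:ℝ) < (Nat.factorial k : ℝ) := by exact_mod_cast Nat.factorial_pos k
  have hp : (x/2) ^ (2*((k:ℕ)+1:ℕ) + ν) = (x/2) ^ (2*(k:ℝ) + (ν+1)) * (x/2) := by
    push_cast
    rw [show (2*((k:ℝ)+1)+ν) = (2*(k:ℝ)+(ν+1)) + 1 by ring, Real.rpow_add hx2, Real.rpow_one]
  have hcast : (((k:ℕ)+1:ℕ):ℝ) + ν + 1 = (k:ℝ) + (ν + 1) + 1 := by push_cast; ring
  rw [bT, bT, hcast, hp, Nat.factorial_succ]
  push_cast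
  field_simp

lemma bessel_rec {ν x : ℝ} (hν : 0 ≤ ν) (hx : 0 < x) :
    x * besselI (ν - 1) x = 2 * ν * besselI ν x + x * besselI (ν + 1) x := by
  have hx2 : (0:ℝ) < x / 2 := by linarith
  have hs1 : Summable (bT (ν - 1) x) := bT_summable hx
  have hs2 : Summable (bT ν x) := bT_summable hx
  have hs3 : Summable (bT (ν + 1) x) := bT_summable hx
  have hs2' : Summable (fun k => bT ν x (k + 1)) := (summable_nat_add_iff 1).2 hs2
  have key0 : x * bT (ν - 1) x 0 = 2 * ν * bT ν x 0 := by
    rw [bT_left hν hx 0]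
    push_cast
    field_simp
    ring
  have keyS : ∀ k : ℕ, x * bT (ν - 1) x (k + 1)
      = 2 * ν * bT ν x (k + 1) + x * bT (ν + 1) x k := by
    intro k
    have h1 : bT (ν - 1) x (k + 1) = bT ν x (k + 1) * ((((k:ℕ)+1:ℕ):ℝ) + ν) / (x / 2) := by
      rw [bT_left hν hx (k + 1)]; ring
    have h2 : bT (ν + 1) x k = bT ν x (k + 1) * (((k:ℝ) + 1) / (x / 2)) := by
      rw [bT_shift hν hx k]
      field_simp
    rw [h1, h2]
    push_cast
    field_simp
    ring
  rw [besselI_eq, besselI_eq, besselI_eq, ← tsum_mul_left, ← tsum_mul_left, ← tsum_mul_left]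
  rw [Summable.tsum_eq_zero_add (hs1.mul_left x), Summable.tsum_eq_zero_add (hs2.mul_left (2 * ν))]
  have : ∀ k : ℕ, x * bT (ν - 1) x (k + 1)
      = 2 * ν * bT ν x (k + 1) + x * bT (ν + 1) x k := keyS
  rw [tsum_congr this, Summable.tsum_add (hs2'.mul_left (2 * ν)) (hs3.mul_left x)]
  rw [key0]
  ring

lemma scalar_ineq {ν : ℝ} (hν : 0 ≤ ν) {a b : ℝ} (ha : 0 ≤ a) (hb : 0 ≤ b) :
    2 * (ν / (ν + 1)) ≤ (a + ν) / (b + ν + 1) + (b + ν) / (a + ν + 1) := by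
  have h1 : (0:ℝ) < b + ν + 1 := by linarith
  have h2 : (0:ℝ) < a + ν + 1 := by linarith
  have h3 : (0:ℝ) < ν + 1 := by linarith
  rw [div_add_div _ _ (ne_of_gt h1) (ne_of_gt h2),
    show 2 * (ν / (ν + 1)) = 2 * ν / (ν + 1) by ring,
    div_le_div_iff₀ h3 (by positivity)]
  nlinarith [sq_nonneg (a - b), mul_nonneg ha hb, mul_nonneg (mul_nonneg ha hb) hν,
    mul_nonneg ha hν, mul_nonneg hb hν, mul_nonneg (mul_nonneg ha hν) hν,
    mul_nonneg (mul_nonneg hb hν) hν, sq_nonneg (a + b)]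

lemma scalar_ineq_strict {ν : ℝ} (hν : 0 ≤ ν) :
    2 * (ν / (ν + 1)) < ((0:ℝ) + ν) / ((1:ℝ) + ν + 1) + ((1:ℝ) + ν) / ((0:ℝ) + ν + 1) := by
  have h1 : (0:ℝ) < ν + 2 := by linarith
  have h3 : (0:ℝ) < ν + 1 := by linarith
  have e1 : ((0:ℝ) + ν) / ((1:ℝ) + ν + 1) = ν / (ν + 2) := by ring_nf
  have e2 : ((1:ℝ) + ν) / ((0:ℝ) + ν + 1) = 1 := by
    rw [div_eq_one_iff_eq (by linarith)]; ring
  rw [e1, e2]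
  rw [show 2 * (ν / (ν+1)) = (2*ν) / (ν+1) by ring, div_add' _ _ _ (ne_of_gt h1),
    div_lt_div_iff₀ h3 h1]
  nlinarith

lemma turan {ν x : ℝ} (hν : 0 ≤ ν) (hx : 0 < x) :
    (ν / (ν + 1)) * besselI ν x ^ 2 < besselI (ν - 1) x * besselI (ν + 1) x := by
  have hs1 : Summable (bT (ν - 1) x) := bT_summable hx
  have hs2 : Summable (bT ν x) := bT_summable hx
  have hs3 : Summable (bT (ν + 1) x) := bT_summable hx
  have hn1 : Summable (fun k => ‖bT (ν - 1) x k‖) :=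
    hs1.congr (fun k => (Real.norm_of_nonneg (bT_nonneg (by linarith) hx k)).symm)
  have hn2 : Summable (fun k => ‖bT ν x k‖) :=
    hs2.congr (fun k => (Real.norm_of_nonneg (bT_nonneg (by linarith) hx k)).symm)
  have hn3 : Summable (fun k => ‖bT (ν + 1) x k‖) :=
    hs3.congr (fun k => (Real.norm_of_nonneg (bT_nonneg (by linarith) hx k)).symm)
  have hAC : besselI (ν - 1) x * besselI (ν + 1) x
      = ∑' n, ∑ p ∈ Finset.HasAntidiagonal.antidiagonal n, bT (ν - 1) x p.1 * bT (ν + 1) x p.2 := by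
    rw [besselI_eq, besselI_eq]
    exact tsum_mul_tsum_eq_tsum_sum_antidiagonal_of_summable_norm hn1 hn3
  have hB2 : besselI ν x ^ 2
      = ∑' n, ∑ p ∈ Finset.HasAntidiagonal.antidiagonal n, bT ν x p.1 * bT ν x p.2 := by
    rw [sq, besselI_eq]
    exact tsum_mul_tsum_eq_tsum_sum_antidiagonal_of_summable_norm hn2 hn2
  have hsumS : Summable (fun n => ∑ p ∈ Finset.HasAntidiagonal.antidiagonal n, bT (ν - 1) x p.1 * bT (ν + 1) x p.2) :=
    (summable_norm_sum_mul_antidiagonal_of_summable_norm hn1 hn3).of_norm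
  have hsumT : Summable (fun n => ∑ p ∈ Finset.HasAntidiagonal.antidiagonal n, bT ν x p.1 * bT ν x p.2) :=
    (summable_norm_sum_mul_antidiagonal_of_summable_norm hn2 hn2).of_norm
  -- termwise comparison
  have per_n : ∀ n : ℕ,
      (ν / (ν + 1)) * (∑ p ∈ Finset.HasAntidiagonal.antidiagonal n, bT ν x p.1 * bT ν x p.2)
        ≤ ∑ p ∈ Finset.HasAntidiagonal.antidiagonal n, bT (ν - 1) x p.1 * bT (ν + 1) x p.2 := by
    intro n
    have key : ∀ p ∈ Finset.HasAntidiagonal.antidiagonal n,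
        2 * ((ν / (ν + 1)) * (bT ν x p.1 * bT ν x p.2))
          ≤ (bT (ν - 1) x p.1 * bT (ν + 1) x p.2) + (bT (ν - 1) x p.2 * bT (ν + 1) x p.1) := by
      intro p _
      rw [bT_mul hν hx, bT_mul hν hx]
      have hb : 0 ≤ bT ν x p.1 * bT ν x p.2 :=
        mul_nonneg (bT_nonneg (by linarith) hx _) (bT_nonneg (by linarith) hx _)
      have hsc := scalar_ineq hν (Nat.cast_nonneg p.1) (Nat.cast_nonneg p.2)
      calc 2 * ((ν / (ν + 1)) * (bT ν x p.1 * bT ν x p.2))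
          = (bT ν x p.1 * bT ν x p.2) * (2 * (ν / (ν + 1))) := by ring
        _ ≤ (bT ν x p.1 * bT ν x p.2)
              * (((p.1:ℝ) + ν) / ((p.2:ℝ) + ν + 1) + ((p.2:ℝ) + ν) / ((p.1:ℝ) + ν + 1)) :=
            mul_le_mul_of_nonneg_left hsc hb
        _ = bT ν x p.1 * bT ν x p.2 * (((p.1:ℝ) + ν) / ((p.2:ℝ) + ν + 1))
              + bT ν x p.2 * bT ν x p.1 * (((p.2:ℝ) + ν) / ((p.1:ℝ) + ν + 1)) := by ring
    have H := Finset.sum_le_sum key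
    rw [Finset.sum_add_distrib, ← Finset.mul_sum, ← Finset.mul_sum] at H
    have hswap : ∑ p ∈ Finset.HasAntidiagonal.antidiagonal n, bT (ν - 1) x p.2 * bT (ν + 1) x p.1
        = ∑ p ∈ Finset.HasAntidiagonal.antidiagonal n, bT (ν - 1) x p.1 * bT (ν + 1) x p.2 :=
      Finset.Nat.sum_antidiagonal_swap (f := fun p => bT (ν - 1) x p.1 * bT (ν + 1) x p.2)
    rw [hswap] at H
    linarith
  -- strict at n = 1
  have had1 : Finset.HasAntidiagonal.antidiagonal 1 = {((0:ℕ),(1:ℕ)), (1,0)} := by decide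
  have strict1 :
      (ν / (ν + 1)) * (∑ p ∈ Finset.HasAntidiagonal.antidiagonal 1, bT ν x p.1 * bT ν x p.2)
        < ∑ p ∈ Finset.HasAntidiagonal.antidiagonal 1, bT (ν - 1) x p.1 * bT (ν + 1) x p.2 := by
    rw [had1]
    rw [Finset.sum_insert (by decide), Finset.sum_singleton,
      Finset.sum_insert (by decide), Finset.sum_singleton]
    simp only
    rw [bT_mul hν hx, bT_mul hν hx]
    have hb : 0 < bT ν x 0 * bT ν x 1 :=
      mul_pos (bT_pos (by linarith) hx 0) (bT_pos (by linarith) hx 1)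
    have hsc := scalar_ineq_strict hν
    push_cast
    nlinarith [hsc, hb]
  -- combine
  rw [hAC, hB2, ← tsum_mul_left]
  exact Summable.tsum_lt_tsum (f := fun n => (ν / (ν + 1)) *
      (∑ p ∈ Finset.HasAntidiagonal.antidiagonal n, bT ν x p.1 * bT ν x p.2))
    per_n strict1 (hsumT.mul_left _) hsumS

end BesselAux


theorem besselI_ratio_lower_bound_20 (ν x : ℝ) (hν : 0 ≤ ν) (hx : 0 < x) :
    besselI (ν - 1) x / besselI ν x >
      (ν + Real.sqrt (ν ^ 2 + (ν / (ν + 1)) * x ^ 2)) / x := by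
  set A := besselI (ν - 1) x with hAdef
  set B := besselI ν x with hBdef
  set C := besselI (ν + 1) x with hCdef
  have hA : 0 < A := BesselAux.besselI_pos (by linarith) hx
  have hB : 0 < B := BesselAux.besselI_pos (by linarith) hx
  have hC : 0 < C := BesselAux.besselI_pos (by linarith) hx
  have hrec : x * A = 2 * ν * B + x * C := BesselAux.bessel_rec hν hx
  have htur : (ν / (ν + 1)) * B ^ 2 < A * C := BesselAux.turan hν hx
  rw [gt_iff_lt, div_lt_div_iff₀ hx hB]
  have ht : 0 < x * A - ν * B := by nlinarith
  have hs : Real.sqrt (ν ^ 2 + (ν / (ν + 1)) * x ^ 2) * B < x * A - ν * B := by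
    have h4 : x ^ 2 * ((ν / (ν + 1)) * B ^ 2) < x ^ 2 * (A * C) :=
      mul_lt_mul_of_pos_left htur (by positivity)
    have h6 : x * C = x * A - 2 * ν * B := by linarith
    have h7 : x ^ 2 * (A * C) = (x * A) * (x * C) := by ring
    have h8 : (x * A) * (x * C) = (x * A) * (x * A - 2 * ν * B) := by rw [h6]
    have hM : (ν ^ 2 + (ν / (ν + 1)) * x ^ 2) * B ^ 2 < (x * A - ν * B) ^ 2 := by
      nlinarith [h4, h7, h8]
    have hrw : Real.sqrt (ν ^ 2 + (ν / (ν + 1)) * x ^ 2) * B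
        = Real.sqrt ((ν ^ 2 + (ν / (ν + 1)) * x ^ 2) * B ^ 2) := by
      rw [Real.sqrt_mul (by positivity) (B ^ 2), Real.sqrt_sq hB.le]
    rw [hrw]
    exact (Real.sqrt_lt' ht).mpr hM
  have hexp : (ν + Real.sqrt (ν ^ 2 + (ν / (ν + 1)) * x ^ 2)) * B
      = ν * B + Real.sqrt (ν ^ 2 + (ν / (ν + 1)) * x ^ 2) * B := by ring
  rw [hexp]
  linarith
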